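/- arXiv:1912.05256 — 4 statements merged into one kernel-verified Lean document; each statement's English description precedes it below -/
import Mathlib

section
/- There exist a field extension K of F with [K:F] = 3 and a surjective K-algebra homomorphism from 𝒮 ⊗_F K onto the matrix algebra M₃(K); equivalently, 𝒮 ⊗_F K admits an irreducible representation of dimension 3 over K. -/
open scoped TensorProduct

set_option synthInstance.maxHeartbeats 1000000
set_option maxHeartbeats 1000000

/-- A two-element family of types, used to form binary free products. -/
def fam (A B : Type) : Bool → Type
  | true => A
  | false => B

instance famSemiring (A B : Type) [Semiring A] [Semiring B] : ∀ b, Semiring (fam A B b)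
  | true => ‹Semiring A›
  | false => ‹Semiring B›

instance famAlgebra (k A B : Type) [CommSemiring k] [Semiring A] [Semiring B]
    [Algebra k A] [Algebra k B] : ∀ b, Algebra k (fam A B b)
  | true => ‹Algebra k A›
  | false => ‹Algebra k B›

/-- The free product (coproduct in the category of unital associative `k`-algebras)
`A * B` of two `k`-algebras. -/
abbrev FP (k A B : Type) [CommSemiring k] [Semiring A] [Semiring B]
    [Algebra k A] [Algebra k B] : Type :=
  LinearAlgebra.FreeProduct k (fam A B)

/-- The canonical map `A →ₐ[k] A * B`. -/
noncomputable def inl (k A B : Type) [CommSemiring k] [Semiring A] [Semiring B]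
    [Algebra k A] [Algebra k B] : A →ₐ[k] FP k A B :=
  LinearAlgebra.FreeProduct.ι k (fam A B) true

/-- The canonical map `B →ₐ[k] A * B`. -/
noncomputable def inr (k A B : Type) [CommSemiring k] [Semiring A] [Semiring B]
    [Algebra k A] [Algebra k B] : B →ₐ[k] FP k A B :=
  LinearAlgebra.FreeProduct.ι k (fam A B) false

/-- The field `F = k(y₁,y₂,y₃)` of rational functions in three variables over `k`. -/
abbrev Ffield (k : Type) [Field k] : Type := FractionRing (MvPolynomial (Fin 3) k)

/-- The variable `yᵢ`, viewed as an element of `F = k(y₁,y₂,y₃)`. -/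
noncomputable def yvar (k : Type) [Field k] (i : Fin 3) : Ffield k :=
  algebraMap (MvPolynomial (Fin 3) k) (Ffield k) (MvPolynomial.X i)

/-- The image in `𝒜 * ℬ` of the `i`-th standard primitive idempotent of `𝒜 = F^⊕3`. -/
noncomputable def pgen (k : Type) [Field k] (i : Fin 3) :
    FP (Ffield k) (Fin 3 → Ffield k) (Fin 3 → Ffield k) :=
  inl (Ffield k) (Fin 3 → Ffield k) (Fin 3 → Ffield k) (Pi.single i 1)

/-- The image in `𝒜 * ℬ` of the `i`-th standard primitive idempotent of `ℬ = F^⊕3`. -/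
noncomputable def qgen (k : Type) [Field k] (i : Fin 3) :
    FP (Ffield k) (Fin 3 → Ffield k) (Fin 3 → Ffield k) :=
  inr (Ffield k) (Fin 3 → Ffield k) (Fin 3 → Ffield k) (Pi.single i 1)

/-- The element `X = [p₁,q₁] + y₁[p₁,q₂] + y₂[p₂,q₁] + y₃[p₂,q₂]` of `𝒜 * ℬ`. -/
noncomputable def Xrel (k : Type) [Field k] :
    FP (Ffield k) (Fin 3 → Ffield k) (Fin 3 → Ffield k) :=
  (pgen k 0 * qgen k 0 - qgen k 0 * pgen k 0)
    + yvar k 0 • (pgen k 0 * qgen k 1 - qgen k 1 * pgen k 0)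
    + yvar k 1 • (pgen k 1 * qgen k 0 - qgen k 0 * pgen k 1)
    + yvar k 2 • (pgen k 1 * qgen k 1 - qgen k 1 * pgen k 1)

/-- The `F`-algebra `𝒮`: the quotient of `𝒜 * ℬ = F^⊕3 * F^⊕3` by the two-sided ideal
generated by `X`. -/
noncomputable abbrev Salg (k : Type) [Field k] : Type :=
  @RingQuot (FP (Ffield k) (Fin 3 → Ffield k) (Fin 3 → Ffield k)) Ring.toSemiring
    (fun u v => u = Xrel k ∧ v = 0)

abbrev Apoly (k : Type) [Field k] := MvPolynomial (Fin 3) k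

namespace Sol
open MvPolynomial
variable (k : Type) [Field k]

/-- the matrix V whose columns are the eigenvector basis -/
noncomputable def pV : Matrix (Fin 3) (Fin 3) (Apoly k) :=
  !![1, X 2 * (1 - X 1), X 2 * (X 0 + X 1 - 1 - X 2) * (1 - X 0);
     1, X 0 * X 1 * (1 - X 1), X 0 * (X 0 + X 1 - 1 - X 2) * (X 1 - X 2);
     1, X 1 * (X 0 - X 2), (X 1 - X 2) * (X 2 - X 0) * (1 - X 0)]

/-- adjugate of V, written out explicitly -/
noncomputable def pW : Matrix (Fin 3) (Fin 3) (Apoly k) :=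
  !![pV k 1 1 * pV k 2 2 - pV k 1 2 * pV k 2 1,
     pV k 0 2 * pV k 2 1 - pV k 0 1 * pV k 2 2,
     pV k 0 1 * pV k 1 2 - pV k 0 2 * pV k 1 1;
     pV k 1 2 * pV k 2 0 - pV k 1 0 * pV k 2 2,
     pV k 0 0 * pV k 2 2 - pV k 0 2 * pV k 2 0,
     pV k 0 2 * pV k 1 0 - pV k 0 0 * pV k 1 2;
     pV k 1 0 * pV k 2 1 - pV k 1 1 * pV k 2 0,
     pV k 0 1 * pV k 2 0 - pV k 0 0 * pV k 2 1,
     pV k 0 0 * pV k 1 1 - pV k 0 1 * pV k 1 0]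

/-- determinant of V -/
noncomputable def pd : Apoly k :=
  pV k 0 0 * (pV k 1 1 * pV k 2 2 - pV k 1 2 * pV k 2 1)
  - pV k 0 1 * (pV k 1 0 * pV k 2 2 - pV k 1 2 * pV k 2 0)
  + pV k 0 2 * (pV k 1 0 * pV k 2 1 - pV k 1 1 * pV k 2 0)

/-- diagonal idempotents -/
noncomputable def pP (i : Fin 3) : Matrix (Fin 3) (Fin 3) (Apoly k) :=
  Matrix.diagonal (Pi.single i 1)

/-- numerator of the conjugated idempotents -/
noncomputable def pM (j : Fin 3) : Matrix (Fin 3) (Fin 3) (Apoly k) :=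
  pV k * pP k j * pW k

lemma pVW : pV k * pW k = pd k • 1 := by
  refine Matrix.ext fun i j => ?_
  fin_cases i <;> fin_cases j <;>
    (simp [pV, pW, pd, Matrix.mul_apply, Fin.sum_univ_three, Matrix.one_apply,
      Matrix.smul_apply, smul_eq_mul, Matrix.vecHead, Matrix.vecTail]; try ring)

lemma pWV : pW k * pV k = pd k • 1 := by
  refine Matrix.ext fun i j => ?_
  fin_cases i <;> fin_cases j <;>
    (simp [pV, pW, pd, Matrix.mul_apply, Fin.sum_univ_three, Matrix.one_apply,
      Matrix.smul_apply, smul_eq_mul, Matrix.vecHead, Matrix.vecTail]; try ring)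

lemma pM_apply (j : Fin 3) (a b : Fin 3) : pM k j a b = pV k a j * pW k j b := by
  fin_cases j <;>
    simp [pM, pP, Matrix.mul_apply, Matrix.diagonal_apply, Fin.sum_univ_three, Pi.single_apply]

lemma pP_mul_apply (i : Fin 3) (M : Matrix (Fin 3) (Fin 3) (Apoly k)) (a b : Fin 3) :
    (pP k i * M) a b = (Pi.single i 1 : Fin 3 → Apoly k) a * M a b := by
  simp [pP, Matrix.diagonal_mul]

lemma mul_pP_apply (i : Fin 3) (M : Matrix (Fin 3) (Fin 3) (Apoly k)) (a b : Fin 3) :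
    (M * pP k i) a b = M a b * (Pi.single i 1 : Fin 3 → Apoly k) b := by
  simp [pP, Matrix.mul_diagonal]

lemma pKey :
    (pP k 0 * pM k 0 - pM k 0 * pP k 0)
      + (X 0 : Apoly k) • (pP k 0 * pM k 1 - pM k 1 * pP k 0)
      + (X 1 : Apoly k) • (pP k 1 * pM k 0 - pM k 0 * pP k 1)
      + (X 2 : Apoly k) • (pP k 1 * pM k 1 - pM k 1 * pP k 1) = 0 := by
  refine Matrix.ext fun i j => ?_
  fin_cases i <;> fin_cases j <;>
    (simp only [Matrix.add_apply, Matrix.sub_apply, Matrix.smul_apply, Matrix.zero_apply,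
      pP_mul_apply, mul_pP_apply, pM_apply, smul_eq_mul]
     simp [pV, pW, Pi.single_apply, Matrix.vecHead, Matrix.vecTail]
     try ring)


/-! ## F-level constructions -/

variable [CharZero k]

/-- shorthand for the algebra map into the rational function field -/
noncomputable def phi : Apoly k →+* Ffield k := algebraMap _ _

/-- entrywise algebra map on matrices -/
noncomputable def Phi : Matrix (Fin 3) (Fin 3) (Apoly k) →+* Matrix (Fin 3) (Fin 3) (Ffield k) :=
  (phi k).mapMatrix

lemma Phi_smul (x : Apoly k) (M : Matrix (Fin 3) (Fin 3) (Apoly k)) :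
    Phi k (x • M) = phi k x • Phi k M := by
  refine Matrix.ext fun i j => ?_
  simp [Phi, Matrix.smul_apply, smul_eq_mul, map_mul]

/-- the evaluation point (2,3,5) -/
noncomputable def pt : Fin 3 → k := ![2, 3, 5]

lemma phi_ne {p : Apoly k} (h : MvPolynomial.eval (pt k) p ≠ 0) : phi k p ≠ 0 := by
  intro h0
  apply h
  have : p = 0 := IsFractionRing.injective (Apoly k) (Ffield k) (by simpa [phi] using h0)
  simp [this]

/-- determinant over F -/
noncomputable def dF : Ffield k := phi k (pd k)

lemma dF_ne : dF k ≠ 0 := by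
  rw [dF]; apply phi_ne
  simp [pd, pV, pt, Matrix.vecHead, Matrix.vecTail]
  norm_num

lemma pW0_ne (b : Fin 3) : phi k (pW k 0 b) ≠ 0 := by
  apply phi_ne
  fin_cases b <;>
    (simp [pW, pV, pt, Matrix.vecHead, Matrix.vecTail]; norm_num)

/-- V over F -/
noncomputable def Vm : Matrix (Fin 3) (Fin 3) (Ffield k) := Phi k (pV k)
/-- adjugate over F -/
noncomputable def Wm : Matrix (Fin 3) (Fin 3) (Ffield k) := Phi k (pW k)
/-- inverse of V -/
noncomputable def Vinv : Matrix (Fin 3) (Fin 3) (Ffield k) := (dF k)⁻¹ • Wm k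

lemma smul_one_map : Phi k ((pd k) • 1) = dF k • 1 := by
  rw [Phi_smul, map_one]; rfl

lemma VmVinv : Vm k * Vinv k = 1 := by
  rw [Vinv, mul_smul_comm, Vm, Wm, ← map_mul, pVW, smul_one_map, smul_smul,
    inv_mul_cancel₀ (dF_ne k), one_smul]

lemma VinvVm : Vinv k * Vm k = 1 := by
  rw [Vinv, smul_mul_assoc, Vm, Wm, ← map_mul, pWV, smul_one_map, smul_smul,
    inv_mul_cancel₀ (dF_ne k), one_smul]

/-! ## Algebra homomorphisms -/

/-- conjugation by `V` as an algebra homomorphism -/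
noncomputable def conjA : Matrix (Fin 3) (Fin 3) (Ffield k) →ₐ[Ffield k] Matrix (Fin 3) (Fin 3) (Ffield k) where
  toFun x := Vm k * x * Vinv k
  map_one' := by show Vm k * 1 * Vinv k = 1; rw [mul_one, VmVinv]
  map_mul' x y := by
    show Vm k * (x * y) * Vinv k = Vm k * x * Vinv k * (Vm k * y * Vinv k)
    have : Vm k * x * Vinv k * (Vm k * y * Vinv k) = Vm k * x * (Vinv k * Vm k) * y * Vinv k := by
      noncomm_ring
    rw [this, VinvVm, mul_one]
    noncomm_ring
  map_zero' := by simp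
  map_add' x y := by show Vm k * (x + y) * Vinv k = _; noncomm_ring
  commutes' r := by
    show Vm k * algebraMap _ _ r * Vinv k = _
    rw [Algebra.algebraMap_eq_smul_one, mul_smul_comm, smul_mul_assoc, mul_one, VmVinv]

/-- the hom `𝒜 → M₃(F)` -/
noncomputable def phiA : (Fin 3 → Ffield k) →ₐ[Ffield k] Matrix (Fin 3) (Fin 3) (Ffield k) :=
  Matrix.diagonalAlgHom (Ffield k)

/-- the hom `ℬ → M₃(F)` -/
noncomputable def phiB : (Fin 3 → Ffield k) →ₐ[Ffield k] Matrix (Fin 3) (Fin 3) (Ffield k) :=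
  (conjA k).comp (Matrix.diagonalAlgHom (Ffield k))

/-- the pair of homs, as a family over `Bool` -/
noncomputable def mapsFam : {i : Bool} →
    (fam (Fin 3 → Ffield k) (Fin 3 → Ffield k) i) →ₐ[Ffield k] Matrix (Fin 3) (Fin 3) (Ffield k)
  | true => phiA k
  | false => phiB k

/-- the lifted hom on the free product -/
noncomputable def gg : FP (Ffield k) (Fin 3 → Ffield k) (Fin 3 → Ffield k) →ₐ[Ffield k]
    Matrix (Fin 3) (Fin 3) (Ffield k) :=
  LinearAlgebra.FreeProduct.lift (Ffield k) (fam _ _) (fun {i} => mapsFam k (i := i))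

/-- image of the first family of idempotents -/
noncomputable def Pm (i : Fin 3) : Matrix (Fin 3) (Fin 3) (Ffield k) :=
  Matrix.diagonal (Pi.single i 1)

/-- image of the second family of idempotents -/
noncomputable def Qm (j : Fin 3) : Matrix (Fin 3) (Fin 3) (Ffield k) :=
  (dF k)⁻¹ • Phi k (pM k j)

lemma gg_p (i : Fin 3) : gg k (pgen k i) = Pm k i := by
  have h := AlgHom.congr_fun
    (LinearAlgebra.FreeProduct.lift_comp_ι (Ffield k)
      (fam (Fin 3 → Ffield k) (Fin 3 → Ffield k)) (fun {i} => mapsFam k (i := i)) (i := true))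
    (Pi.single i 1)
  exact h

lemma diag_single_map (j : Fin 3) :
    Phi k (pP k j) = Matrix.diagonal (Pi.single j (1 : Ffield k)) := by
  refine Matrix.ext fun i c => ?_
  simp [Phi, pP, Matrix.diagonal_apply, Pi.single_apply, apply_ite (phi k)]

lemma gg_q (j : Fin 3) : gg k (qgen k j) = Qm k j := by
  have h := AlgHom.congr_fun
    (LinearAlgebra.FreeProduct.lift_comp_ι (Ffield k)
      (fam (Fin 3 → Ffield k) (Fin 3 → Ffield k)) (fun {i} => mapsFam k (i := i)) (i := false))
    (Pi.single j 1)
  have h2 : gg k (qgen k j) = Vm k * Matrix.diagonal (Pi.single j 1) * Vinv k := by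
    exact h
  rw [h2, Qm, Vinv, mul_smul_comm, ← diag_single_map, pM, map_mul, map_mul]
  rfl

lemma keyF :
    (Pm k 0 * Qm k 0 - Qm k 0 * Pm k 0)
      + yvar k 0 • (Pm k 0 * Qm k 1 - Qm k 1 * Pm k 0)
      + yvar k 1 • (Pm k 1 * Qm k 0 - Qm k 0 * Pm k 1)
      + yvar k 2 • (Pm k 1 * Qm k 1 - Qm k 1 * Pm k 1) = 0 := by
  have h := congrArg (Phi k) (pKey k)
  rw [map_zero] at h
  simp only [map_add, map_sub, map_mul, Phi_smul, diag_single_map] at h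
  have e : ∀ j : Fin 3, Qm k j = (dF k)⁻¹ • Phi k (pM k j) := fun _ => rfl
  simp only [e, mul_smul_comm, smul_mul_assoc, ← smul_sub, Pm]
  rw [smul_comm (yvar k 0) ((dF k)⁻¹), smul_comm (yvar k 1) ((dF k)⁻¹),
    smul_comm (yvar k 2) ((dF k)⁻¹), ← smul_add, ← smul_add, ← smul_add]
  have : yvar k 0 = phi k (MvPolynomial.X 0) := rfl
  rw [show yvar k 0 = phi k (MvPolynomial.X 0) from rfl,
    show yvar k 1 = phi k (MvPolynomial.X 1) from rfl,
    show yvar k 2 = phi k (MvPolynomial.X 2) from rfl, h, smul_zero]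

lemma gg_X : gg k (Xrel k) = 0 := by
  have hsub : ∀ a b : FP (Ffield k) (Fin 3 → Ffield k) (Fin 3 → Ffield k),
      gg k (a - b) = gg k a - gg k b := fun a b => map_sub (gg k) a b
  have hmul : ∀ a b : FP (Ffield k) (Fin 3 → Ffield k) (Fin 3 → Ffield k),
      gg k (a * b) = gg k a * gg k b := fun a b => map_mul (gg k) a b
  simp only [Xrel, map_add, map_smul, hsub, hmul, gg_p, gg_q]
  exact keyF k

/-! ## The quotient homomorphism -/

/-- the induced hom on `𝒮` -/
noncomputable def f0 : Salg k →ₐ[Ffield k] Matrix (Fin 3) (Fin 3) (Ffield k) :=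
  RingQuot.liftAlgHom (Ffield k)
    ⟨gg k, by rintro x y ⟨rfl, rfl⟩; rw [gg_X, map_zero]⟩

/-- quotient map onto `𝒮` -/
noncomputable def mkS : FP (Ffield k) (Fin 3 → Ffield k) (Fin 3 → Ffield k) →ₐ[Ffield k] Salg k :=
  RingQuot.mkAlgHom (Ffield k) _

lemma f0_mk (x : FP (Ffield k) (Fin 3 → Ffield k) (Fin 3 → Ffield k)) :
    f0 k (mkS k x) = gg k x :=
  RingQuot.liftAlgHom_mkAlgHom_apply _ _ _ _

lemma sandwich (M : Matrix (Fin 3) (Fin 3) (Ffield k)) (a b : Fin 3) :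
    Pm k a * M * Pm k b = M a b • Matrix.single a b (1 : Ffield k) := by
  refine Matrix.ext fun i j => ?_
  by_cases hi : i = a <;> by_cases hj : j = b <;>
    simp [Pm, Matrix.diagonal_mul, Matrix.mul_diagonal, Matrix.single,
      Pi.single_apply, Matrix.smul_apply, smul_eq_mul, hi, hj, eq_comm (a := a) (b := i), eq_comm (a := b) (b := j)]

lemma pV_col0 (a : Fin 3) : pV k a 0 = 1 := by
  fin_cases a <;> simp [pV, Matrix.vecHead, Matrix.vecTail]

lemma Qm0_entry (a b : Fin 3) : Qm k 0 a b = (dF k)⁻¹ * phi k (pW k 0 b) := by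
  have : pM k 0 a b = pV k a 0 * pW k 0 b := pM_apply k 0 a b
  rw [Qm, Matrix.smul_apply, smul_eq_mul]
  congr 1
  show phi k (pM k 0 a b) = _
  rw [this, pV_col0, one_mul]

lemma Qm0_ne (a b : Fin 3) : Qm k 0 a b ≠ 0 := by
  rw [Qm0_entry]
  exact mul_ne_zero (inv_ne_zero (dF_ne k)) (pW0_ne k b)

lemma exists_pre (a b : Fin 3) :
    ∃ z : Salg k, f0 k z = Matrix.single a b (1 : Ffield k) := by
  refine ⟨(Qm k 0 a b)⁻¹ • mkS k (pgen k a * qgen k 0 * pgen k b), ?_⟩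
  have hmul : ∀ x y : FP (Ffield k) (Fin 3 → Ffield k) (Fin 3 → Ffield k),
      gg k (x * y) = gg k x * gg k y := fun x y => map_mul (gg k) x y
  rw [map_smul, f0_mk, hmul, hmul, gg_p, gg_p, gg_q, sandwich, smul_smul,
    inv_mul_cancel₀ (Qm0_ne k a b), one_smul]

end Sol

theorem statement7 (k : Type) [Field k] [IsAlgClosed k] [CharZero k] :
    ∃ (K : Type) (_ : Field K) (_ : Algebra (Ffield k) K),
      Module.finrank (Ffield k) K = 3 ∧
      ∃ f : (K ⊗[Ffield k] Salg k) →ₐ[K] Matrix (Fin 3) (Fin 3) K,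
        Function.Surjective f := by
  classical
  -- `y₀` has no cube root in `F`
  have h3 : ∀ b : Ffield k, b ^ 3 ≠ yvar k 0 := by
    intro b hb
    have hint : IsIntegral (Apoly k) b := by
      refine ⟨Polynomial.X ^ 3 - Polynomial.C (MvPolynomial.X 0),
        Polynomial.monic_X_pow_sub_C _ (by norm_num), ?_⟩
      simp only [Polynomial.eval₂_sub, Polynomial.eval₂_pow, Polynomial.eval₂_X,
        Polynomial.eval₂_C, hb]
      rw [show yvar k 0 = algebraMap (Apoly k) (Ffield k) (MvPolynomial.X 0) from rfl, sub_self]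
    obtain ⟨c, hc⟩ := IsIntegrallyClosed.isIntegral_iff.mp hint
    have hX : c ^ 3 = (MvPolynomial.X 0 : Apoly k) := by
      apply IsFractionRing.injective (Apoly k) (Ffield k)
      rw [map_pow, hc, hb]; rfl
    have hprime : Prime (MvPolynomial.X (0 : Fin 3) : Apoly k) := by
      have h1 : Prime ((MvPolynomial.finSuccEquiv k 2) (MvPolynomial.X 0)) := by
        rw [MvPolynomial.finSuccEquiv_X_zero]; exact Polynomial.prime_X
      exact (MulEquiv.prime_iff (p := (MvPolynomial.X 0 : Apoly k)) (MvPolynomial.finSuccEquiv k 2)).mp h1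
    have hdvd : (MvPolynomial.X (0 : Fin 3) : Apoly k) ∣ c :=
      hprime.dvd_of_dvd_pow (n := 3) ⟨1, by rw [hX, mul_one]⟩
    obtain ⟨t, ht⟩ := hdvd
    have hcan : (MvPolynomial.X (0 : Fin 3) : Apoly k)
        * (MvPolynomial.X 0 ^ 2 * t ^ 3) = MvPolynomial.X 0 * 1 := by
      rw [mul_one]
      conv_rhs => rw [← hX, ht]
      ring
    have h1 : (MvPolynomial.X 0 ^ 2 * t ^ 3 : Apoly k) = 1 :=
      mul_left_cancel₀ (MvPolynomial.X_ne_zero 0) hcan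
    exact hprime.not_isUnit (IsUnit.of_mul_eq_one (MvPolynomial.X 0 * t ^ 3)
      (by rw [← h1]; ring))
  have hirr : Irreducible ((Polynomial.X : Polynomial (Ffield k)) ^ 3
      - Polynomial.C (yvar k 0)) :=
    X_pow_sub_C_irreducible_of_prime Nat.prime_three h3
  haveI : Fact (Irreducible ((Polynomial.X : Polynomial (Ffield k)) ^ 3
      - Polynomial.C (yvar k 0))) := ⟨hirr⟩
  refine ⟨AdjoinRoot ((Polynomial.X : Polynomial (Ffield k)) ^ 3 - Polynomial.C (yvar k 0)),
    inferInstance, inferInstance, ?_, ?_⟩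
  · have hne : ((Polynomial.X : Polynomial (Ffield k)) ^ 3 - Polynomial.C (yvar k 0)) ≠ 0 :=
      (Polynomial.monic_X_pow_sub_C _ (by norm_num : (3:ℕ) ≠ 0)).ne_zero
    rw [(AdjoinRoot.powerBasis hne).finrank, AdjoinRoot.powerBasis_dim,
      Polynomial.natDegree_X_pow_sub_C]
  · set K := AdjoinRoot ((Polynomial.X : Polynomial (Ffield k)) ^ 3 - Polynomial.C (yvar k 0))
      with hK
    let g2 : Salg k →ₐ[Ffield k] Matrix (Fin 3) (Fin 3) K :=
      ((Algebra.ofId (Ffield k) K).mapMatrix).comp (Sol.f0 k)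
    have hcomm : ∀ (a : K) (b : Salg k),
        Commute ((Algebra.ofId K (Matrix (Fin 3) (Fin 3) K)) a) (g2 b) :=
      fun a b => Algebra.commutes a (g2 b)
    refine ⟨Algebra.TensorProduct.lift (Algebra.ofId K (Matrix (Fin 3) (Fin 3) K)) g2 hcomm, ?_⟩
    have hstd : ∀ (a b : Fin 3) (c : K), Matrix.single a b c ∈
        (Algebra.TensorProduct.lift (Algebra.ofId K (Matrix (Fin 3) (Fin 3) K)) g2 hcomm).range := by
      intro a b c
      obtain ⟨z, hz⟩ := Sol.exists_pre k a b
      refine ⟨c ⊗ₜ z, ?_⟩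
      simp only [AlgHom.toRingHom_eq_coe, RingHom.coe_coe]
      rw [Algebra.TensorProduct.lift_tmul]
      have hg2 : g2 z = Matrix.single a b (1 : K) := by
        show (Algebra.ofId (Ffield k) K).mapMatrix (Sol.f0 k z) = _
        rw [hz]
        refine Matrix.ext fun i j => ?_
        simp [Matrix.single, apply_ite (Algebra.ofId (Ffield k) K)]
      rw [hg2, Algebra.ofId_apply, ← Algebra.smul_def, Matrix.smul_single,
        smul_eq_mul, mul_one]
    intro M
    have hM : M ∈
        (Algebra.TensorProduct.lift (Algebra.ofId K (Matrix (Fin 3) (Fin 3) K)) g2 hcomm).range := by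
      rw [Matrix.matrix_eq_sum_single M]
      exact Subalgebra.sum_mem _ fun i _ => Subalgebra.sum_mem _ fun j _ => hstd i j _
    obtain ⟨x, hx⟩ := hM
    exact ⟨x, by simpa using hx⟩
end

section
/- Let A and B be finite-dimensional unital associative k-algebras, let Ā be a k-linear complement of k·1 in A and B̄ a k-linear complement of k·1 in B, identified with their images in A*B (so that Ā ⊕ B̄ is a subspace of A*B). Let V ⊆ Ā ⊕ B̄ be a k-subspace such that the projections π_A : Ā ⊕ B̄ → Ā and π_B : Ā ⊕ B̄ → B̄ restrict to surjections of V onto Ā and onto B̄, and let R(V) denote the subalgebra of A*B generated by V. Put m = min(dim_k A, dim_k B). Then there is a surjective homomorphism of left R(V)-modules R(V)^⊕m → A*B; equivalently, A*B is generated by m elements as a left R(V)-module. -/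
open scoped TensorProduct

/-- The free product is generated as a `k`-algebra by the images of `inl` and `inr`. -/
theorem fp_adjoin_top (k A B : Type) [Field k] [Ring A] [Ring B] [Algebra k A] [Algebra k B]
    (y : FP k A B) :
    y ∈ Algebra.adjoin k (Set.range (inl k A B) ∪ Set.range (inr k A B)) := by
  classical
  obtain ⟨x, rfl⟩ := RingCon.mkₐ_surjective (α := k) (LinearAlgebra.FreeProduct.ringCon k (fam A B)) y
  induction x using TensorAlgebra.induction with
  | algebraMap r => rw [AlgHom.commutes]; exact Subalgebra.algebraMap_mem (Algebra.adjoin k (Set.range (inl k A B) ∪ Set.range (inr k A B))) r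
  | ι v =>
      show LinearAlgebra.FreeProduct.ι' k (fam A B) v ∈ _
      induction v using DirectSum.induction_on with
      | zero => simpa using Subalgebra.zero_mem _
      | of i a =>
          have h1 : (DirectSum.of (fam A B) i) a = DirectSum.lof k Bool (fam A B) i a := rfl
          have h2 : LinearAlgebra.FreeProduct.ι' k (fam A B) (DirectSum.lof k Bool (fam A B) i a)
              = LinearAlgebra.FreeProduct.ι k (fam A B) i a := by
            rw [LinearAlgebra.FreeProduct.ι_def]; rfl
          rw [h1, h2]
          apply Algebra.subset_adjoin
          cases i with
          | true => exact Or.inl ⟨a, rfl⟩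
          | false => exact Or.inr ⟨a, rfl⟩
      | add x y hx hy => rw [map_add]; exact Subalgebra.add_mem _ hx hy
  | mul a b ha hb => rw [map_mul]; exact Subalgebra.mul_mem _ ha hb
  | add a b ha hb => rw [map_add]; exact Subalgebra.add_mem _ ha hb

/-- The key structural lemma: under the surjectivity hypotheses, everything in `F` lies in
the `k`-span of elements `r * f a` with `r ∈ R`. -/
theorem aux_span {k F A B : Type} [Field k] [Ring A] [Ring B] [Ring F]
    [Algebra k A] [Algebra k B] [Algebra k F]
    (f : A →ₐ[k] F) (g : B →ₐ[k] F)
    (Abar : Submodule k A) (Bbar : Submodule k B)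
    (hA : Submodule.span k {(1:A)} ⊔ Abar = ⊤)
    (hB : Submodule.span k {(1:B)} ⊔ Bbar = ⊤)
    (R : Subalgebra k F)
    (hsA : ∀ a ∈ Abar, ∃ b ∈ Bbar, f a + g b ∈ R)
    (hsB : ∀ b ∈ Bbar, ∃ a ∈ Abar, f a + g b ∈ R)
    (hgen : ∀ y : F, y ∈ Algebra.adjoin k (Set.range f ∪ Set.range g))
    (y : F) : y ∈ Submodule.span k {z | ∃ r ∈ R, ∃ a : A, z = r * f a} := by
  set S := Submodule.span k {z | ∃ r ∈ R, ∃ a : A, z = r * f a} with hS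
  have L1 : ∀ r ∈ R, ∀ a : A, r * f a ∈ S := fun r hr a =>
    Submodule.subset_span ⟨r, hr, a, rfl⟩
  have L0 : ∀ r ∈ R, r ∈ S := fun r hr => by
    have := L1 r hr 1; rwa [map_one, mul_one] at this
  have L2 : ∀ r ∈ R, ∀ b : B, r * g b ∈ S := by
    intro r hr b
    have hb : b ∈ Submodule.span k {(1:B)} ⊔ Bbar := hB ▸ Submodule.mem_top
    obtain ⟨u, hu, w, hw, huw⟩ := Submodule.mem_sup.mp hb
    obtain ⟨μ, hμ⟩ := Submodule.mem_span_singleton.mp hu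
    obtain ⟨a', ha', hv⟩ := hsB w hw
    have hgb : g b = μ • (1:F) + g w := by
      rw [← huw, map_add, ← hμ, map_smul, map_one]
    have h1 : r * g b = μ • r + r * g w := by
      rw [hgb, mul_add, mul_smul_comm, mul_one]
    have h2 : r * g w = r * (f a' + g w) - r * f a' := by
      rw [mul_add]; abel
    rw [h1, h2]
    exact S.add_mem (S.smul_mem μ (L0 r hr))
      (S.sub_mem (L0 _ (R.mul_mem hr hv)) (L1 r hr a'))
  have L3 : ∀ s ∈ S, ∀ a : A, s * f a ∈ S := by
    intro s hs a
    induction hs using Submodule.span_induction with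
    | mem z hz =>
        obtain ⟨r, hr, z', rfl⟩ := hz
        rw [mul_assoc, ← map_mul]; exact L1 r hr _
    | zero => rw [zero_mul]; exact S.zero_mem
    | add x y _ _ hx hy => rw [add_mul]; exact S.add_mem hx hy
    | smul t x _ hx => rw [smul_mul_assoc]; exact S.smul_mem t hx
  have L4 : ∀ s ∈ S, ∀ b : B, s * g b ∈ S := by
    intro s hs b
    induction hs using Submodule.span_induction with
    | mem z hz =>
        obtain ⟨r, hr, z', rfl⟩ := hz
        have hz' : z' ∈ Submodule.span k {(1:A)} ⊔ Abar := hA ▸ Submodule.mem_top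
        obtain ⟨u, hu, w, hw, huw⟩ := Submodule.mem_sup.mp hz'
        obtain ⟨lam, hlam⟩ := Submodule.mem_span_singleton.mp hu
        obtain ⟨b', hb', hv⟩ := hsA w hw
        have hfz : f z' = lam • (1:F) + f w := by
          rw [← huw, map_add, ← hlam, map_smul, map_one]
        have e1 : r * f z' = lam • r + r * f w := by
          rw [hfz, mul_add, mul_smul_comm, mul_one]
        have e2 : r * f z' * g b = lam • (r * g b) + r * f w * g b := by
          rw [e1, add_mul, smul_mul_assoc]
        have e3 : r * f w * g b = (r * (f w + g b')) * g b - r * g (b' * b) := by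
          rw [map_mul]; noncomm_ring
        rw [e2, e3]
        exact S.add_mem (S.smul_mem _ (L2 r hr b))
          (S.sub_mem (L2 (r * (f w + g b')) (R.mul_mem hr hv) b) (L2 r hr _))
    | zero => rw [zero_mul]; exact S.zero_mem
    | add x y _ _ hx hy => rw [add_mul]; exact S.add_mem hx hy
    | smul t x _ hx => rw [smul_mul_assoc]; exact S.smul_mem t hx
  -- the set of elements whose left multiples stay in S forms a subalgebra
  let T : Subalgebra k F :=
    { carrier := {y | ∀ s ∈ S, s * y ∈ S}
      mul_mem' := fun {x y} hx hy s hs => by rw [← mul_assoc]; exact hy _ (hx s hs)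
      one_mem' := fun s hs => by rwa [mul_one]
      add_mem' := fun {x y} hx hy s hs => by rw [mul_add]; exact S.add_mem (hx s hs) (hy s hs)
      zero_mem' := fun s hs => by rw [mul_zero]; exact S.zero_mem
      algebraMap_mem' := fun t s hs => by
        rw [Algebra.algebraMap_eq_smul_one, mul_smul_comm, mul_one]; exact S.smul_mem t hs }
  have hT : Algebra.adjoin k (Set.range f ∪ Set.range g) ≤ T := by
    apply Algebra.adjoin_le
    rintro z (⟨a, rfl⟩ | ⟨b, rfl⟩)
    · exact fun s hs => L3 s hs a
    · exact fun s hs => L4 s hs b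
  have hy := hT (hgen y) 1 (L0 1 R.one_mem)
  rwa [one_mul] at hy

/-- Extraction of a finite generating family from the span description. -/
theorem aux_extract {k F A : Type} [Field k] [Ring A] [Ring F] [Algebra k A] [Algebra k F]
    [FiniteDimensional k A] (f : A →ₐ[k] F) (R : Subalgebra k F) {m : ℕ}
    (hm : m = Module.finrank k A) :
    ∃ x : Fin m → F, ∀ y ∈ Submodule.span k {z | ∃ r ∈ R, ∃ a : A, z = r * f a},
      ∃ c : Fin m → F, (∀ i, c i ∈ R) ∧ y = ∑ i, c i * x i := by
  classical
  let e := Module.finBasis k A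
  refine ⟨fun i => f (e (Fin.cast hm i)), fun y hy => ?_⟩
  induction hy using Submodule.span_induction with
  | mem z hz =>
      obtain ⟨r, hr, a, rfl⟩ := hz
      refine ⟨fun i => (e.repr a (Fin.cast hm i)) • r, fun i => R.smul_mem hr _, ?_⟩
      have step : ∀ i : Fin m, (e.repr a (Fin.cast hm i) • r) * f (e (Fin.cast hm i))
          = e.repr a (Fin.cast hm i) • (r * f (e (Fin.cast hm i))) := fun i => smul_mul_assoc _ _ _
      calc r * f a = r * f (∑ j, e.repr a j • e j) := by rw [e.sum_repr a]
        _ = ∑ j, e.repr a j • (r * f (e j)) := by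
            rw [map_sum, Finset.mul_sum]
            exact Finset.sum_congr rfl fun j _ => by rw [map_smul, mul_smul_comm]
        _ = ∑ i : Fin m, e.repr a (Fin.cast hm i) • (r * f (e (Fin.cast hm i))) :=
            (Equiv.sum_comp (finCongr hm) fun j => e.repr a j • (r * f (e j))).symm
        _ = ∑ i : Fin m, (e.repr a (Fin.cast hm i) • r) * f (e (Fin.cast hm i)) := by
            exact Finset.sum_congr rfl fun i _ => (step i).symm
  | zero => exact ⟨0, fun i => R.zero_mem, by simp⟩
  | add x y _ _ hx hy =>
      obtain ⟨cx, hcx, rfl⟩ := hx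
      obtain ⟨cy, hcy, rfl⟩ := hy
      exact ⟨fun i => cx i + cy i, fun i => R.add_mem (hcx i) (hcy i), by
        rw [← Finset.sum_add_distrib]
        exact Finset.sum_congr rfl fun i _ => (add_mul _ _ _).symm⟩
  | smul t x _ hx =>
      obtain ⟨cx, hcx, rfl⟩ := hx
      exact ⟨fun i => t • cx i, fun i => R.smul_mem (hcx i) t, by
        rw [Finset.smul_sum]
        exact Finset.sum_congr rfl fun i _ => (smul_mul_assoc _ _ _).symm⟩

theorem statement15 (k : Type) [Field k] [IsAlgClosed k] [CharZero k]
    (A B : Type) [Ring A] [Ring B] [Algebra k A] [Algebra k B]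
    [FiniteDimensional k A] [FiniteDimensional k B]
    -- `Ā` and `B̄` are `k`-linear complements of `k·1` in `A` and in `B`
    (Abar : Submodule k A) (Bbar : Submodule k B)
    (hAbar : IsCompl (Submodule.span k {(1 : A)}) Abar)
    (hBbar : IsCompl (Submodule.span k {(1 : B)}) Bbar)
    -- `V` is a subspace of `Ā ⊕ B̄ ⊆ A*B` ...
    (V : Submodule k (FP k A B))
    (hV : ∀ v ∈ V, ∃ a ∈ Abar, ∃ b ∈ Bbar, v = inl k A B a + inr k A B b)
    -- ... such that the projections `π_A, π_B` restrict to surjections of `V` onto `Ā`, `B̄`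
    (hsurjA : ∀ a ∈ Abar, ∃ b ∈ Bbar, inl k A B a + inr k A B b ∈ V)
    (hsurjB : ∀ b ∈ Bbar, ∃ a ∈ Abar, inl k A B a + inr k A B b ∈ V) :
    -- then `A*B` is generated by `m = min (dim A) (dim B)` elements
    -- as a left module over the subalgebra `R(V)` generated by `V`
    ∃ x : Fin (min (Module.finrank k A) (Module.finrank k B)) → FP k A B,
      ∀ y : FP k A B,
        ∃ c : Fin (min (Module.finrank k A) (Module.finrank k B)) → FP k A B,
          (∀ i, c i ∈ Algebra.adjoin k (V : Set (FP k A B))) ∧ y = ∑ i, c i * x i := by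
  classical
  set R : Subalgebra k (FP k A B) := Algebra.adjoin k (V : Set (FP k A B)) with hR
  have hVR : ∀ v ∈ V, v ∈ R := fun v hv => Algebra.subset_adjoin hv
  rcases le_total (Module.finrank k A) (Module.finrank k B) with h | h
  · have hmin : min (Module.finrank k A) (Module.finrank k B) = Module.finrank k A :=
      min_eq_left h
    obtain ⟨x, hx⟩ := aux_extract (inl k A B) R hmin
    refine ⟨x, fun y => ?_⟩
    refine hx y ?_
    refine aux_span (inl k A B) (inr k A B) Abar Bbar hAbar.sup_eq_top hBbar.sup_eq_top R
      (fun a ha => ?_) (fun b hb => ?_) (fp_adjoin_top k A B) y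
    · obtain ⟨b, hb, hv⟩ := hsurjA a ha
      exact ⟨b, hb, hVR _ hv⟩
    · obtain ⟨a, ha, hv⟩ := hsurjB b hb
      exact ⟨a, ha, hVR _ hv⟩
  · have hmin : min (Module.finrank k A) (Module.finrank k B) = Module.finrank k B :=
      min_eq_right h
    obtain ⟨x, hx⟩ := aux_extract (inr k A B) R hmin
    refine ⟨x, fun y => ?_⟩
    refine hx y ?_
    refine aux_span (inr k A B) (inl k A B) Bbar Abar hBbar.sup_eq_top hAbar.sup_eq_top R
      (fun b hb => ?_) (fun a ha => ?_) (fun y => ?_) y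
    · obtain ⟨a, ha, hv⟩ := hsurjB b hb
      exact ⟨a, ha, by rw [add_comm]; exact hVR _ hv⟩
    · obtain ⟨b, hb, hv⟩ := hsurjA a ha
      exact ⟨b, hb, by rw [add_comm]; exact hVR _ hv⟩
    · rw [Set.union_comm]; exact fp_adjoin_top k A B y
end

section
/- Let R be a unital associative k-algebra and R₁ ⊆ R a subalgebra such that there exists a surjective homomorphism of left R₁-modules R₁^⊕s → R for some natural number s. If every simple left R₁-module has k-dimension at most r, then every simple left R-module has k-dimension at most s·r. -/
theorem statement17 (k : Type) [Field k] [IsAlgClosed k] [CharZero k]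
    (R : Type) [Ring R] [Algebra k R] (R₁ : Subalgebra k R) (s r : ℕ)
    -- there is a surjection of left `R₁`-modules `R₁^⊕s → R`, i.e. `R` is generated
    -- by `s` elements as a left `R₁`-module
    (x : Fin s → R)
    (hx : ∀ y : R, ∃ a : Fin s → R, (∀ i, a i ∈ R₁) ∧ y = ∑ i, a i * x i)
    -- every simple left `R₁`-module has `k`-dimension at most `r`
    (h : ∀ (M : Type) [AddCommGroup M] [Module R₁ M] [Module k M] [IsScalarTower k R₁ M],
      IsSimpleModule R₁ M → Module.rank k M ≤ (r : Cardinal)) :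
    -- then every simple left `R`-module has `k`-dimension at most `s * r`
    ∀ (N : Type) [AddCommGroup N] [Module R N] [Module k N] [IsScalarTower k R N],
      IsSimpleModule R N → Module.rank k N ≤ ((s * r : ℕ) : Cardinal) := by
  intro N _ _ _ _ hN
  have : Nontrivial N := IsSimpleModule.nontrivial R N
  obtain ⟨v, hv⟩ := exists_ne (0 : N)
  -- N is generated over R₁ by the x i • v
  have hspanR : Submodule.span R {v} = ⊤ := by
    rcases hN.1.2 (Submodule.span R {v}) with h' | h'
    · exact absurd (Submodule.span_eq_bot.mp h' v rfl) hv
    · exact h'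
  have hfg : (⊤ : Submodule R₁ N).FG := by
    classical
    refine ⟨Finset.image (fun i => x i • v) Finset.univ, ?_⟩
    apply top_le_iff.mp
    intro n _
    have hn : n ∈ Submodule.span R {v} := hspanR ▸ Submodule.mem_top
    obtain ⟨y, rfl⟩ := Submodule.mem_span_singleton.mp hn
    obtain ⟨a, ha, hy⟩ := hx y
    rw [hy, Finset.sum_smul]
    apply Submodule.sum_mem
    intro i _
    rw [mul_smul]
    exact Submodule.smul_mem _ (⟨a i, ha i⟩ : R₁)
      (Submodule.subset_span (Finset.mem_image.mpr ⟨i, Finset.mem_univ i, rfl⟩))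
  -- get a maximal R₁-submodule U
  have hcoatomic : IsCoatomic (Submodule R₁ N) :=
    CompleteLattice.coatomic_of_top_compact ((Submodule.fg_iff_compact _).mp hfg)
  obtain ⟨U, hU⟩ : ∃ U : Submodule R₁ N, IsCoatom U := by
    rcases hcoatomic.eq_top_or_exists_le_coatom ⊥ with h' | ⟨U, hU, _⟩
    · exact absurd h' bot_ne_top
    · exact ⟨U, hU⟩
  have hUsimple : IsSimpleModule R₁ (N ⧸ U) := isSimpleModule_iff_isCoatom.mpr hU
  -- the injective k-linear map N → (Fin s → N ⧸ U)
  let φ : N →ₗ[k] (Fin s → N ⧸ U) :=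
    { toFun := fun n i => Submodule.Quotient.mk (x i • n)
      map_add' := by intro m n; funext i; simp [smul_add]
      map_smul' := by
        intro c n; funext i
        simp only [RingHom.id_apply, Pi.smul_apply]
        rw [smul_comm, ← Submodule.Quotient.mk_smul] }
  have hinj : Function.Injective φ := by
    rw [← LinearMap.ker_eq_bot, LinearMap.ker_eq_bot']
    intro n hn
    have hxin : ∀ i, x i • n ∈ U := by
      intro i
      have := congrFun hn i
      simpa [φ, Submodule.Quotient.mk_eq_zero] using this
    -- the set of elements all of whose R-multiples lie in U is an R-submodule
    let K : Submodule R N :=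
      { carrier := {m | ∀ y : R, y • m ∈ U}
        add_mem' := by intro a b ha hb y; rw [smul_add]; exact U.add_mem (ha y) (hb y)
        zero_mem' := by intro y; rw [smul_zero]; exact U.zero_mem
        smul_mem' := by intro c m hm y; rw [smul_smul]; exact hm (y * c) }
    have hKne : K ≠ ⊤ := by
      intro hK
      apply hU.1
      rw [eq_top_iff]
      intro m _
      have hm : m ∈ K := hK ▸ Submodule.mem_top
      simpa using hm 1
    have hKbot : K = ⊥ := (hN.1.2 K).resolve_right hKne
    have hnK : n ∈ K := by
      intro y
      obtain ⟨a, ha, hy⟩ := hx y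
      rw [hy, Finset.sum_smul]
      apply Submodule.sum_mem
      intro i _
      rw [mul_smul]
      exact U.smul_mem (⟨a i, ha i⟩ : R₁) (hxin i)
    simpa [hKbot] using hnK
  calc Module.rank k N ≤ Module.rank k (Fin s → N ⧸ U) :=
        LinearMap.rank_le_of_injective φ hinj
    _ = (s : Cardinal) * Module.rank k (N ⧸ U) := by
        rw [rank_fun_eq_lift_mul]; simp
    _ ≤ (s : Cardinal) * (r : Cardinal) :=
        mul_le_mul_right (h (N ⧸ U) hUsimple) _
    _ = ((s * r : ℕ) : Cardinal) := by rw [Nat.cast_mul]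
end

section
/- Let l ≥ 2, let R = k^⊕l * k^⊕2 with p₁,…,p_l the standard orthogonal primitive idempotents of the first factor and q₁,q₂ those of the second factor, let Ā be the k-span of p₁,…,p_{l−1} and B̄ the k-span of q₁ inside R. Let V ⊆ Ā ⊕ B̄ be a k-subspace such that V is not contained in Ā and such that the subalgebra of k^⊕l generated by V ∩ Ā is all of k^⊕l. Let R(V) be the subalgebra of R generated by V. Then the quotient of R by the two-sided ideal generated by all commutators of elements of R(V) is isomorphic as a k-algebra to k^⊕l ⊗_k k^⊕2 (equivalently, to k^⊕2l). -/
open scoped TensorProduct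

set_option synthInstance.maxHeartbeats 1000000
set_option maxHeartbeats 1000000

/-- The relation whose induced quotient of `R` is the quotient by the two-sided ideal
generated by all commutators of elements of the subalgebra generated by `S`. -/
def commRel (k R : Type) [CommSemiring k] [Ring R] [Algebra k R] (S : Set R)
    (u v : R) : Prop :=
  (∃ a ∈ Algebra.adjoin k S, ∃ b ∈ Algebra.adjoin k S, u = a * b - b * a) ∧ v = 0

/-- The subspace `Ā ⊆ k^⊕l * k^⊕2` spanned by (the images of) the idempotents
`p₁, …, p_{l-1}`. -/
noncomputable def Abar (k : Type) [Field k] (l : ℕ) :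
    Submodule k (FP k (Fin l → k) (Fin 2 → k)) :=
  Submodule.span k
    {x | ∃ i : Fin l, (i : ℕ) < l - 1 ∧ x = inl k (Fin l → k) (Fin 2 → k) (Pi.single i 1)}

/-- The subspace `B̄ ⊆ k^⊕l * k^⊕2` spanned by (the image of) the idempotent `q₁`. -/
noncomputable def Bbar (k : Type) [Field k] (l : ℕ) :
    Submodule k (FP k (Fin l → k) (Fin 2 → k)) :=
  Submodule.span k {inr k (Fin l → k) (Fin 2 → k) (Pi.single 0 1)}

section Aux

variable (k A B : Type) [CommSemiring k] [Semiring A] [Semiring B]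
    [Algebra k A] [Algebra k B]
variable {C : Type} [Semiring C] [Algebra k C]

/-- The family of maps of a pair of algebra maps. -/
def famHom (f : A →ₐ[k] C) (g : B →ₐ[k] C) : ∀ b, fam A B b →ₐ[k] C
  | true => f
  | false => g

/-- Universal property of the binary free product. -/
noncomputable def fpLift (f : A →ₐ[k] C) (g : B →ₐ[k] C) : FP k A B →ₐ[k] C :=
  LinearAlgebra.FreeProduct.lift k (fam A B) (fun {b} => famHom k A B f g b)

@[simp] lemma fpLift_inl (f : A →ₐ[k] C) (g : B →ₐ[k] C) (x : A) :
    fpLift k A B f g (inl k A B x) = f x := by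
  have h := LinearAlgebra.FreeProduct.lift_comp_ι k (fam A B)
    (fun {b} => famHom k A B f g b) (i := true)
  exact AlgHom.congr_fun h x

@[simp] lemma fpLift_inr (f : A →ₐ[k] C) (g : B →ₐ[k] C) (y : B) :
    fpLift k A B f g (inr k A B y) = g y := by
  have h := LinearAlgebra.FreeProduct.lift_comp_ι k (fam A B)
    (fun {b} => famHom k A B f g b) (i := false)
  exact AlgHom.congr_fun h y

lemma fp_algHom_ext {f g : FP k A B →ₐ[k] C}
    (h1 : f.comp (inl k A B) = g.comp (inl k A B))
    (h2 : f.comp (inr k A B) = g.comp (inr k A B)) : f = g := by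
  have hf := LinearAlgebra.FreeProduct.lift_unique k (fam A B)
    (fun {b} => famHom k A B (f.comp (inl k A B)) (f.comp (inr k A B)) b) f
    (by intro i; cases i <;> rfl)
  have hg := LinearAlgebra.FreeProduct.lift_unique k (fam A B)
    (fun {b} => famHom k A B (f.comp (inl k A B)) (f.comp (inr k A B)) b) g
    (by intro i; cases i
        · exact h2.symm
        · exact h1.symm)
  rw [hf, hg]

lemma fp_adjoin_eq_top (S : Subalgebra k (FP k A B))
    (hA : ∀ x : A, inl k A B x ∈ S) (hB : ∀ y : B, inr k A B y ∈ S) : S = ⊤ := by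
  let f : A →ₐ[k] S := (inl k A B).codRestrict S hA
  let g : B →ₐ[k] S := (inr k A B).codRestrict S hB
  let P : FP k A B →ₐ[k] S := fpLift k A B f g
  have key : S.val.comp P = AlgHom.id k (FP k A B) := by
    apply fp_algHom_ext
    · ext x
      simp [P, f]
    · ext y
      simp [P, g]
  rw [eq_top_iff]
  intro x _
  have : S.val (P x) = x := AlgHom.congr_fun key x
  rw [← this]
  exact (P x).2

end Aux

/-- Currying/reindexing equivalence for products of copies of `k`. -/
noncomputable def curryAlgEquiv (k : Type) [Field k] (l : ℕ) :
    (Fin 2 → Fin l → k) ≃ₐ[k] (Fin (2 * l) → k) where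
  toFun f m := f (finProdFinEquiv.symm m).1 (finProdFinEquiv.symm m).2
  invFun g i j := g (finProdFinEquiv (i, j))
  left_inv f := by funext i j; simp
  right_inv g := by
    funext m
    have h : finProdFinEquiv ((finProdFinEquiv.symm m).1, (finProdFinEquiv.symm m).2) = m := by
      rw [Prod.mk.eta, Equiv.apply_symm_apply]
    show g (finProdFinEquiv ((finProdFinEquiv.symm m).1, (finProdFinEquiv.symm m).2)) = g m
    rw [h]
  map_mul' _ _ := rfl
  map_add' _ _ := rfl
  commutes' _ := rfl

/-- `k^l ⊗ k^2 ≅ k^(2l)`. -/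
noncomputable def tensorPiEquiv (k : Type) [Field k] (l : ℕ) :
    ((Fin l → k) ⊗[k] (Fin 2 → k)) ≃ₐ[k] (Fin (2 * l) → k) :=
  (Algebra.TensorProduct.piRight k k (Fin l → k) (fun _ : Fin 2 => k)).trans <|
    (AlgEquiv.piCongrRight (fun _ : Fin 2 => Algebra.TensorProduct.rid k k (Fin l → k))).trans
      (curryAlgEquiv k l)

theorem statement19 (k : Type) [Field k] [IsAlgClosed k] [CharZero k]
    (l : ℕ) (hl : 2 ≤ l)
    (V : Submodule k (FP k (Fin l → k) (Fin 2 → k)))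
    -- `V ⊆ Ā ⊕ B̄`
    (hVsub : V ≤ Abar k l ⊔ Bbar k l)
    -- `V` is not contained in `Ā`
    (hVA : ¬ V ≤ Abar k l)
    -- the subalgebra of `k^⊕l` generated by `V ∩ Ā` is all of `k^⊕l`
    (hgen : Algebra.adjoin k
        ((inl k (Fin l → k) (Fin 2 → k)) ⁻¹'
          ((V ⊓ Abar k l : Submodule k (FP k (Fin l → k) (Fin 2 → k))) :
            Set (FP k (Fin l → k) (Fin 2 → k)))) = ⊤) :
    Nonempty
      (RingQuot (commRel k (FP k (Fin l → k) (Fin 2 → k))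
          (V : Set (FP k (Fin l → k) (Fin 2 → k))))
        ≃ₐ[k] ((Fin l → k) ⊗[k] (Fin 2 → k))) ∧
    Nonempty
      (RingQuot (commRel k (FP k (Fin l → k) (Fin 2 → k))
          (V : Set (FP k (Fin l → k) (Fin 2 → k))))
        ≃ₐ[k] (Fin (2 * l) → k)) := by
  classical
  -- Step 1: the subalgebra generated by `V` is everything.
  have hrange : (inl k (Fin l → k) (Fin 2 → k)).range ≤ Algebra.adjoin k (V : Set (FP k (Fin l → k) (Fin 2 → k))) := by
    have h1 : Subalgebra.map (inl k (Fin l → k) (Fin 2 → k)) ⊤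
        = Subalgebra.map (inl k (Fin l → k) (Fin 2 → k))
          (Algebra.adjoin k ((inl k (Fin l → k) (Fin 2 → k)) ⁻¹'
            ((V ⊓ Abar k l : Submodule k (FP k (Fin l → k) (Fin 2 → k))) : Set (FP k (Fin l → k) (Fin 2 → k))))) := by
      rw [hgen]
    rw [Algebra.map_top, AlgHom.map_adjoin] at h1
    rw [h1]
    calc Algebra.adjoin k ((inl k (Fin l → k) (Fin 2 → k)) ''
          ((inl k (Fin l → k) (Fin 2 → k)) ⁻¹' ((V ⊓ Abar k l : Submodule k (FP k (Fin l → k) (Fin 2 → k))) : Set (FP k (Fin l → k) (Fin 2 → k)))))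
        ≤ Algebra.adjoin k ((V ⊓ Abar k l : Submodule k (FP k (Fin l → k) (Fin 2 → k))) : Set (FP k (Fin l → k) (Fin 2 → k))) :=
          Algebra.adjoin_mono (Set.image_preimage_subset _ _)
      _ ≤ Algebra.adjoin k (V : Set (FP k (Fin l → k) (Fin 2 → k))) :=
          Algebra.adjoin_mono (fun x hx => (Submodule.mem_inf.mp hx).1)
  have hAbarmem : ∀ x ∈ Abar k l, x ∈ Algebra.adjoin k (V : Set (FP k (Fin l → k) (Fin 2 → k))) := by
    intro x hx
    have hle : Abar k l
        ≤ Subalgebra.toSubmodule (Algebra.adjoin k (V : Set (FP k (Fin l → k) (Fin 2 → k)))) := by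
      rw [Abar]
      apply Submodule.span_le.mpr
      rintro _ ⟨i, hi, rfl⟩
      exact hrange ⟨Pi.single i 1, rfl⟩
    exact hle hx
  obtain ⟨v, hvV, hvA⟩ := SetLike.not_le_iff_exists.mp hVA
  obtain ⟨a, ha, b, hb, hab⟩ := Submodule.mem_sup.mp (hVsub hvV)
  rw [Bbar, Submodule.mem_span_singleton] at hb
  obtain ⟨c, rfl⟩ := hb
  have hc : c ≠ 0 := by
    rintro rfl
    apply hvA
    rw [← hab, zero_smul, add_zero]
    exact ha
  have hq1 : inr k (Fin l → k) (Fin 2 → k) (Pi.single 0 1) ∈ Algebra.adjoin k (V : Set (FP k (Fin l → k) (Fin 2 → k))) := by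
    have h1 : c • inr k (Fin l → k) (Fin 2 → k) (Pi.single 0 1) = v - a := eq_sub_of_add_eq' hab
    have h2 : c • inr k (Fin l → k) (Fin 2 → k) (Pi.single 0 1) ∈ Algebra.adjoin k (V : Set (FP k (Fin l → k) (Fin 2 → k))) := by
      rw [h1]
      exact sub_mem (Algebra.subset_adjoin hvV) (hAbarmem a ha)
    have h3 := Subalgebra.smul_mem _ h2 c⁻¹
    rwa [smul_smul, inv_mul_cancel₀ hc, one_smul] at h3
  have hinr : ∀ y : Fin 2 → k, inr k (Fin l → k) (Fin 2 → k) y ∈ Algebra.adjoin k (V : Set (FP k (Fin l → k) (Fin 2 → k))) := by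
    intro y
    have hy : y = y 1 • (1 : Fin 2 → k) + (y 0 - y 1) • (Pi.single 0 1 : Fin 2 → k) := by
      funext i
      fin_cases i <;>
        simp [Pi.single_apply, Pi.smul_apply, smul_eq_mul] <;> ring
    rw [hy, map_add, map_smul, map_smul, map_one]
    exact add_mem (Subalgebra.smul_mem _ (one_mem _) _) (Subalgebra.smul_mem _ hq1 _)
  have htop : Algebra.adjoin k (V : Set (FP k (Fin l → k) (Fin 2 → k))) = ⊤ :=
    fp_adjoin_eq_top k (Fin l → k) (Fin 2 → k) _ (fun x => hrange ⟨x, rfl⟩) hinr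
  -- Step 2: the quotient is the abelianization; construct the isomorphism with `A ⊗ B`.
  set rel := commRel k (FP k (Fin l → k) (Fin 2 → k)) (V : Set (FP k (Fin l → k) (Fin 2 → k))) with hrel
  let mk : FP k (Fin l → k) (Fin 2 → k) →ₐ[k] RingQuot rel := RingQuot.mkAlgHom k rel
  have hmkcomm : ∀ x y : FP k (Fin l → k) (Fin 2 → k), mk x * mk y = mk y * mk x := by
    intro x y
    have hr : rel (x * y - y * x) 0 :=
      ⟨⟨x, by rw [htop]; trivial, y, by rw [htop]; trivial, rfl⟩, rfl⟩
    have h := RingQuot.mkAlgHom_rel k hr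
    rw [map_sub, map_mul, map_mul, map_zero, sub_eq_zero] at h
    exact h
  let F : FP k (Fin l → k) (Fin 2 → k) →ₐ[k] ((Fin l → k) ⊗[k] (Fin 2 → k)) :=
    fpLift k (Fin l → k) (Fin 2 → k) Algebra.TensorProduct.includeLeft Algebra.TensorProduct.includeRight
  have hF : ∀ ⦃x y⦄, rel x y → F x = F y := by
    intro x y h
    obtain ⟨⟨p, -, q, -, rfl⟩, rfl⟩ := h
    rw [map_sub, map_mul, map_mul, map_zero, mul_comm (F p) (F q), sub_self]
  let φ : RingQuot rel →ₐ[k] ((Fin l → k) ⊗[k] (Fin 2 → k)) := RingQuot.liftAlgHom k ⟨F, hF⟩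
  let ψ : ((Fin l → k) ⊗[k] (Fin 2 → k)) →ₐ[k] RingQuot rel :=
    Algebra.TensorProduct.lift (mk.comp (inl k (Fin l → k) (Fin 2 → k))) (mk.comp (inr k (Fin l → k) (Fin 2 → k)))
      (fun x y => hmkcomm _ _)
  have hψφ : ψ.comp φ = AlgHom.id k (RingQuot rel) := by
    apply RingQuot.ringQuot_ext'
    apply fp_algHom_ext
    · ext x
      simp [φ, ψ, F, mk, RingQuot.liftAlgHom_mkAlgHom_apply,
        Algebra.TensorProduct.lift_tmul]
      erw [Algebra.TensorProduct.lift_tmul]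
      simp
    · ext y
      simp [φ, ψ, F, mk, RingQuot.liftAlgHom_mkAlgHom_apply,
        Algebra.TensorProduct.lift_tmul]
      erw [Algebra.TensorProduct.lift_tmul]
      simp
  have hφψ : φ.comp ψ = AlgHom.id k ((Fin l → k) ⊗[k] (Fin 2 → k)) := by
    apply Algebra.TensorProduct.ext'
    intro x y
    simp [φ, ψ, F, mk, RingQuot.liftAlgHom_mkAlgHom_apply,
      Algebra.TensorProduct.lift_tmul, Algebra.TensorProduct.tmul_mul_tmul]
    erw [Algebra.TensorProduct.lift_tmul]
    simp [RingQuot.liftAlgHom_mkAlgHom_apply, Algebra.TensorProduct.tmul_mul_tmul]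
  let e1 : RingQuot rel ≃ₐ[k] ((Fin l → k) ⊗[k] (Fin 2 → k)) := AlgEquiv.ofAlgHom φ ψ hφψ hψφ
  exact ⟨⟨e1⟩, ⟨e1.trans (tensorPiEquiv k l)⟩⟩
end
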